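/- Let y ∈ A, let V be a subgradient tuple at y, let c_0 > 0, let x̂ be a global minimiser of Γ(·, y, V) over A, and suppose that for every c ≥ c_0 a global minimiser x(c) of Q_c(·, y, V) over A is chosen. Then for every η_2 ∈ (0, 1) there exists c* ≥ c_0 such that for all c ≥ c* one has Q_c(x(c), y, V) − Q_c(y, y, V) ≤ η_2 c (Γ(x(c), y, V) − Γ(y, y, V)). -/
import Mathlib


open RealInnerProductSpace Finset Filter Topology

noncomputable section

/-- Euclidean space `ℝ^d`. -/
abbrev Euc (d : ℕ) := EuclideanSpace ℝ (Fin d)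

/-- The (convex-analysis) subdifferential of `f` at `y`. -/
def subdiff {d : ℕ} (f : Euc d → ℝ) (y : Euc d) : Set (Euc d) :=
  {v | ∀ x, f y + ⟪v, x - y⟫ ≤ f x}

/-- The normal cone to `A` at `x`. -/
def normalCone {d : ℕ} (A : Set (Euc d)) (x : Euc d) : Set (Euc d) :=
  {v | ∀ y ∈ A, ⟪v, y - x⟫ ≤ 0}

/-- A subgradient tuple `V = (v₀, vᵢ (i ∈ I), vⱼ, wⱼ (j ∈ E))` at the point `y`:
`v_k ∈ ∂h_k(y)` for `k ∈ {0} ∪ I ∪ E` and `w_j ∈ ∂g_j(y)` for `j ∈ E`. -/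
structure SubgradTuple {d l p : ℕ} (h0 : Euc d → ℝ) (hI : Fin l → Euc d → ℝ)
    (gE hE : Fin p → Euc d → ℝ) (y : Euc d) : Type where
  v0 : Euc d
  vI : Fin l → Euc d
  vE : Fin p → Euc d
  wE : Fin p → Euc d
  v0_mem : v0 ∈ subdiff h0 y
  vI_mem : ∀ i, vI i ∈ subdiff (hI i) y
  vE_mem : ∀ j, vE j ∈ subdiff (hE j) y
  wE_mem : ∀ j, wE j ∈ subdiff (gE j) y

variable {d l p : ℕ}

/-- The linearised infeasibility measure `Γ(x, y, V)`. -/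
def Gam (gI : Fin l → Euc d → ℝ) {h0 : Euc d → ℝ} {hI : Fin l → Euc d → ℝ}
    {gE hE : Fin p → Euc d → ℝ} {y : Euc d}
    (V : SubgradTuple h0 hI gE hE y) (x : Euc d) : ℝ :=
  (∑ i, max (gI i x - hI i y - ⟪V.vI i, x - y⟫) 0)
  + ∑ j, max (gE j x - hE j y - ⟪V.vE j, x - y⟫)
      (hE j x - gE j y - ⟪V.wE j, x - y⟫)

/-- The convex majorant `Q_c(x, y, V)` of the penalty function. -/
def Qfun (g0 : Euc d → ℝ) (gI : Fin l → Euc d → ℝ) {h0 : Euc d → ℝ}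
    {hI : Fin l → Euc d → ℝ} {gE hE : Fin p → Euc d → ℝ} {y : Euc d}
    (V : SubgradTuple h0 hI gE hE y) (c : ℝ) (x : Euc d) : ℝ :=
  g0 x - ⟪V.v0, x - y⟫ + c * Gam gI V x

/-- The ℓ1 penalty term `φ`. -/
def phi (gI hI : Fin l → Euc d → ℝ) (gE hE : Fin p → Euc d → ℝ) (x : Euc d) : ℝ :=
  (∑ i, max (gI i x - hI i x) 0) + ∑ j, |gE j x - hE j x|

/-- The ℓ1 penalty function `Φ_c = f₀ + c φ`. -/
def Phi (g0 h0 : Euc d → ℝ) (gI hI : Fin l → Euc d → ℝ) (gE hE : Fin p → Euc d → ℝ)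
    (c : ℝ) (x : Euc d) : ℝ :=
  (g0 x - h0 x) + c * phi gI hI gE hE x

/-- Feasibility for the problem (P). -/
def Feasible (A : Set (Euc d)) (gI hI : Fin l → Euc d → ℝ)
    (gE hE : Fin p → Euc d → ℝ) (x : Euc d) : Prop :=
  x ∈ A ∧ (∀ i, gI i x - hI i x ≤ 0) ∧ (∀ j, gE j x - hE j x = 0)

/-- Criticality for the problem (P) (Definition 1). -/
def IsCritical (A : Set (Euc d)) (g0 h0 : Euc d → ℝ) (gI hI : Fin l → Euc d → ℝ)
    (gE hE : Fin p → Euc d → ℝ) (x : Euc d) : Prop :=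
  ∃ V : SubgradTuple h0 hI gE hE x, ∃ lam : Fin l → ℝ, ∃ mu1 mu2 : Fin p → ℝ,
    (∀ i, 0 ≤ lam i) ∧ (∀ j, 0 ≤ mu1 j) ∧ (∀ j, 0 ≤ mu2 j) ∧
    (∀ i, lam i * (gI i x - hI i x) = 0) ∧
    ∃ u0 ∈ subdiff g0 x, ∃ uI : Fin l → Euc d, (∀ i, uI i ∈ subdiff (gI i) x) ∧
    ∃ uE : Fin p → Euc d, (∀ j, uE j ∈ subdiff (gE j) x) ∧
    ∃ zE : Fin p → Euc d, (∀ j, zE j ∈ subdiff (hE j) x) ∧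
    ∃ ν ∈ normalCone A x,
      (0 : Euc d) = (u0 - V.v0) + (∑ i, lam i • (uI i - V.vI i))
        + (∑ j, mu1 j • (uE j - V.vE j)) - (∑ j, mu2 j • (V.wE j - zE j)) + ν

/-- Generalised criticality for the penalty parameter `c`. -/
def IsGenCritical (A : Set (Euc d)) (g0 h0 : Euc d → ℝ) (gI hI : Fin l → Euc d → ℝ)
    (gE hE : Fin p → Euc d → ℝ) (c : ℝ) (x : Euc d) : Prop :=
  x ∈ A ∧ ∃ V : SubgradTuple h0 hI gE hE x, ∀ z ∈ A, Qfun g0 gI V c x ≤ Qfun g0 gI V c z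

/-- Criticality for the penalty term `φ`. -/
def IsCriticalPen (A : Set (Euc d)) (h0 : Euc d → ℝ) (gI hI : Fin l → Euc d → ℝ)
    (gE hE : Fin p → Euc d → ℝ) (x : Euc d) : Prop :=
  x ∈ A ∧ ∃ V : SubgradTuple h0 hI gE hE x, ∀ z ∈ A, Gam gI V x ≤ Gam gI V z

/-- `F` is coercive on `A`. -/
def CoerciveOn {d : ℕ} (F : Euc d → ℝ) (A : Set (Euc d)) : Prop :=
  ∀ u : ℕ → Euc d, (∀ n, u n ∈ A) → Tendsto (fun n => ‖u n‖) atTop atTop →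
    Tendsto (fun n => F (u n)) atTop atTop

set_option maxHeartbeats 1000000 in
theorem stmt10 {d l p : ℕ} (A : Set (Euc d)) (g0 h0 : Euc d → ℝ)
    (gI hI : Fin l → Euc d → ℝ) (gE hE : Fin p → Euc d → ℝ)
    (hA : Convex ℝ A) (hAcl : IsClosed A) (hAne : A.Nonempty)
    (hg0 : ConvexOn ℝ Set.univ g0) (hh0 : ConvexOn ℝ Set.univ h0)
    (hgI : ∀ i, ConvexOn ℝ Set.univ (gI i)) (hhI : ∀ i, ConvexOn ℝ Set.univ (hI i))
    (hgE : ∀ j, ConvexOn ℝ Set.univ (gE j)) (hhE : ∀ j, ConvexOn ℝ Set.univ (hE j))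
    (y : Euc d) (hyA : y ∈ A) (V : SubgradTuple h0 hI gE hE y)
    (c0 : ℝ) (hc0 : 0 < c0)
    (xhat : Euc d) (hxhatA : xhat ∈ A) (hxhat : ∀ z ∈ A, Gam gI V xhat ≤ Gam gI V z)
    (xsel : ℝ → Euc d)
    (hsel : ∀ c ≥ c0, xsel c ∈ A ∧ ∀ z ∈ A, Qfun g0 gI V c (xsel c) ≤ Qfun g0 gI V c z) :
    ∀ η2 : ℝ, 0 < η2 → η2 < 1 → ∃ cs ≥ c0, ∀ c ≥ cs,
      Qfun g0 gI V c (xsel c) - Qfun g0 gI V c y ≤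
        η2 * c * (Gam gI V (xsel c) - Gam gI V y) := by
  intro eta heta heta'
  have hselA : ∀ c ≥ c0, xsel c ∈ A := fun c hc => (hsel c hc).1
  have hmin : ∀ c ≥ c0, ∀ z ∈ A, Qfun g0 gI V c (xsel c) ≤ Qfun g0 gI V c z :=
    fun c hc => (hsel c hc).2
  have hQ : ∀ (c : ℝ) (x : Euc d),
      Qfun g0 gI V c x = (g0 x - ⟪V.v0, x - y⟫) + c * Gam gI V x := fun _ _ => rfl
  have hGy : Gam gI V xhat ≤ Gam gI V y := hxhat y hyA
  rcases eq_or_lt_of_le hGy with hd | hd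
  · -- case Γ(x̂) = Γ(y)
    refine ⟨c0, le_refl c0, fun c hc => ?_⟩
    have hcpos : 0 < c := lt_of_lt_of_le hc0 hc
    have h1 := hmin c hc y hyA
    have h3 : Gam gI V xhat ≤ Gam gI V (xsel c) := hxhat _ (hselA c hc)
    rw [hQ, hQ] at h1 ⊢
    have h4 : Gam gI V y ≤ Gam gI V (xsel c) := hd ▸ h3
    nlinarith [mul_nonneg (mul_nonneg heta.le hcpos.le)
      (sub_nonneg.2 h4), h1]
  · -- case Γ(x̂) < Γ(y)
    have hdpos : (0:ℝ) < Gam gI V y - Gam gI V xhat := sub_pos.2 hd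
    set Lhat : ℝ := g0 xhat - ⟪V.v0, xhat - y⟫ with hLhat
    set Ly : ℝ := g0 y - ⟪V.v0, y - y⟫ with hLy
    set L0 : ℝ := g0 (xsel c0) - ⟪V.v0, xsel c0 - y⟫ with hL0
    set Kp : ℝ := max (Lhat - L0) 0 with hKp
    set Km : ℝ := max (Lhat - Ly) 0 with hKm
    set del : ℝ := Gam gI V y - Gam gI V xhat with hdel
    refine ⟨max c0 (max (2 * Kp / del) (2 * Km / ((1 - eta) * del))),
      le_max_left _ _, fun c hc => ?_⟩
    have hcc0 : c0 ≤ c := le_trans (le_max_left _ _) hc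
    have hcpos : 0 < c := lt_of_lt_of_le hc0 hcc0
    have hb1 : 2 * Kp / del ≤ c :=
      le_trans (le_trans (le_max_left _ _) (le_max_right c0 _)) hc
    have hb2 : 2 * Km / ((1 - eta) * del) ≤ c :=
      le_trans (le_trans (le_max_right _ _) (le_max_right c0 _)) hc
    have h1ed : (0:ℝ) < (1 - eta) * del := mul_pos (by linarith) hdpos
    have hb1' : 2 * Kp ≤ c * del := by
      have := (div_le_iff₀ hdpos).1 hb1; linarith
    have hb2' : 2 * Km ≤ c * ((1 - eta) * del) := by
      have := (div_le_iff₀ h1ed).1 hb2; linarith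
    have hxcA := hselA c hcc0
    have h1 := hmin c hcc0 y hyA
    have h2 := hmin c hcc0 xhat hxhatA
    have h3 : Gam gI V xhat ≤ Gam gI V (xsel c) := hxhat _ hxcA
    have h4 := hmin c0 le_rfl (xsel c) hxcA
    have h5 := hmin c hcc0 (xsel c0) (hselA c0 le_rfl)
    simp only [hQ] at h1 h2 h4 h5 ⊢
    set Lc : ℝ := g0 (xsel c) - ⟪V.v0, xsel c - y⟫ with hLc
    clear_value Lc Lhat Ly L0 Kp Km del
    -- L(xsel c) ≥ L0
    have hm : L0 ≤ Lc := by
      rcases eq_or_lt_of_le hcc0 with h | h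
      · rw [hL0, hLc, h]
      · by_contra hlt
        push_neg at hlt
        have hg : 0 < Gam gI V (xsel c) - Gam gI V (xsel c0) := by
          nlinarith [h4, hc0]
        have := mul_pos (sub_pos.2 h) hg
        nlinarith [h4, h5, this]
    -- L(xsel c) ≤ Lhat
    have hLle : Lc ≤ Lhat := by
      have hmul := mul_le_mul_of_nonneg_left h3 hcpos.le
      linarith
    -- c * (Γ(xc) - Γ(x̂)) ≤ Kp
    have e1 : c * (Gam gI V (xsel c) - Gam gI V xhat) ≤ Kp := by
      have h6 : c * (Gam gI V (xsel c) - Gam gI V xhat) ≤ Lhat - Lc := by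
        rw [mul_sub]; linarith
      calc c * (Gam gI V (xsel c) - Gam gI V xhat) ≤ Lhat - Lc := h6
        _ ≤ Lhat - L0 := by linarith
        _ ≤ Kp := hKp ▸ le_max_left _ _
    -- c * (Γ(y) - Γ(xc)) ≥ c * del / 2
    have e3 : c * del / 2 ≤ c * (Gam gI V y - Gam gI V (xsel c)) := by
      have hcdel : c * del = c * (Gam gI V y - Gam gI V xhat) := by rw [hdel]
      nlinarith [e1, hb1']
    have e4 : 2 * Km ≤ (1 - eta) * (c * del) := by
      have hr : c * ((1 - eta) * del) = (1 - eta) * (c * del) := by ring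
      linarith [hb2', hr]
    have e5 : (1 - eta) * (c * del / 2) ≤
        (1 - eta) * (c * (Gam gI V y - Gam gI V (xsel c))) :=
      mul_le_mul_of_nonneg_left e3 (by linarith)
    have key : Lc - Ly ≤ (1 - eta) * (c * (Gam gI V y - Gam gI V (xsel c))) := by
      have hK : Lhat - Ly ≤ Km := hKm ▸ le_max_left _ _
      have hr : (1 - eta) * (c * del / 2) * 2 = (1 - eta) * (c * del) := by ring
      linarith [hLle, hK, e4, e5, hr]
    nlinarith [key, hLy]
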